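/- arXiv:1501.03264 — 2 statements merged into one kernel-verified Lean document; each statement's English description precedes it below -/
import Mathlib

section
/- Let S be a finite set partitioned into nonempty blocks S₁, …, S_n with distinguished elements m_i ∈ S_i. Let Π₀ be the set of permutations π of S such that for each block S_i and each x ∈ S_i \ {m_i}, π(x) ∈ {x, T(x)} for a fixed map T with the property that iterating T from any point of S_i reaches m_i while staying inside S_i (and T(m_i) = m_i). Then for every vector (y₁,…,y_n) with y_i ∈ S_i and every permutation σ of {1,…,n}, there exists π ∈ Π₀ with π(m_i) = y_{σ(i)} for all i. -/
/-- in the block partition setting, for every choice of targets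
yᵢ ∈ Sᵢ and every permutation σ of the block indices there is a permutation
π ∈ Π₀ (i.e. π(x) ∈ {x, T(x)} off the distinguished points) with
π(mᵢ) = y_{σ(i)} for all i. -/
theorem stmt15 {α : Type*} [Fintype α] [DecidableEq α] {n : ℕ}
    (B : Fin n → Finset α) (m : Fin n → α)
    (hpart : ∀ x : α, ∃! i, x ∈ B i)
    (hm : ∀ i, m i ∈ B i)
    (T : α → α)
    (hTB : ∀ i, ∀ x ∈ B i, T x ∈ B i)
    (hTm : ∀ i, T (m i) = m i)
    (hTfix : ∀ x, (∀ i, x ≠ m i) → T x ≠ x)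
    (horb : ∀ i, ∀ x ∈ B i, ∃ k : ℕ, T^[k] x = m i ∧
      ∀ j l, j < l → l ≤ k → T^[j] x ≠ T^[l] x)
    (y : Fin n → α) (hy : ∀ i, y i ∈ B i) (σ : Equiv.Perm (Fin n)) :
    ∃ π : Equiv.Perm α,
      (∀ x, (∀ i, x ≠ m i) → π x = x ∨ π x = T x) ∧
      ∀ i, π (m i) = y (σ i) := by
  classical
  have hBdisj : ∀ {x : α} {i j}, x ∈ B i → x ∈ B j → i = j := by
    intro x i j hi hj
    obtain ⟨c, _, hu⟩ := hpart x
    exact (hu i hi).trans (hu j hj).symm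
  have hmInj : Function.Injective m := by
    intro i j hij
    exact hBdisj (hm i) (hij ▸ hm j)
  choose k hk hkinj using fun j => horb j (y j) (hy j)
  have hchain : ∀ j t, T^[t] (y j) ∈ B j := by
    intro j t
    induction t with
    | zero => simpa using hy j
    | succ t ih => rw [Function.iterate_succ_apply']; exact hTB j _ ih
  have huniq : ∀ {j j' : Fin n} {t s : ℕ}, t ≤ k j → s ≤ k j' →
      T^[t] (y j) = T^[s] (y j') → j = j' ∧ t = s := by
    intro j j' t s ht hs heq
    have hj : j = j' := hBdisj (hchain j t) (heq ▸ hchain j' s)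
    subst hj
    refine ⟨rfl, ?_⟩
    rcases lt_trichotomy t s with h | h | h
    · exact absurd heq (hkinj j t s h hs)
    · exact h
    · exact absurd heq.symm (hkinj j s t h ht)
  set f : α → α := fun x =>
    if h : ∃ i, x = m i then y (σ h.choose)
    else if ∃ j, ∃ t, t < k j ∧ T^[t] (y j) = x then T x
    else x with hf
  have hfm : ∀ i, f (m i) = y (σ i) := by
    intro i
    have h : ∃ i', m i = m i' := ⟨i, rfl⟩
    rw [hf]
    simp only [dif_pos h]
    congr 2
    exact (hmInj h.choose_spec).symm
  -- classification of f-values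
  have himg : ∀ a : α,
      (∃ j t, t ≤ k j ∧ a = T^[t] (y j) ∧
        ((t < k j ∧ f a = T^[t+1] (y j)) ∨ (a = m j ∧ f a = y (σ j)))) ∨
      ((¬ ∃ j, ∃ t, t ≤ k j ∧ T^[t] (y j) = a) ∧ f a = a) := by
    intro a
    by_cases hCh : ∃ j, ∃ t, t ≤ k j ∧ T^[t] (y j) = a
    · obtain ⟨j, t, ht, hta⟩ := hCh
      left
      refine ⟨j, t, ht, hta.symm, ?_⟩
      rcases lt_or_eq_of_le ht with ht' | ht'
      · left
        refine ⟨ht', ?_⟩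
        have hnm : ¬ ∃ i, a = m i := by
          rintro ⟨i, rfl⟩
          have hmem : T^[t] (y j) ∈ B i := by rw [hta]; exact hm i
          have hij : i = j := hBdisj hmem (hchain j t)
          have heq : T^[t] (y j) = T^[k j] (y j) := by
            rw [hta, hij]; exact (hk j).symm
          have := (huniq ht (le_refl (k j)) heq).2
          omega
        have hC : ∃ j', ∃ t', t' < k j' ∧ T^[t'] (y j') = a := ⟨j, t, ht', hta⟩
        rw [hf]
        simp only [dif_neg hnm, if_pos hC]
        rw [← hta]
        exact (Function.iterate_succ_apply' T t (y j)).symm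
      · right
        have ham : a = m j := by rw [← hta, ht', hk j]
        exact ⟨ham, by rw [ham, hfm]⟩
    · right
      refine ⟨hCh, ?_⟩
      have hnm : ¬ ∃ i, a = m i := by
        rintro ⟨i, rfl⟩
        exact hCh ⟨i, k i, le_refl _, hk i⟩
      have hC : ¬ ∃ j', ∃ t', t' < k j' ∧ T^[t'] (y j') = a := by
        rintro ⟨j', t', ht', hta⟩
        exact hCh ⟨j', t', le_of_lt ht', hta⟩
      rw [hf]
      simp only [dif_neg hnm, if_neg hC]
  have hinj : Function.Injective f := by
    intro a b hab
    rcases himg a with ⟨j, t, ht, hat, hca⟩ | ⟨hoffa, hfa⟩ <;>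
      rcases himg b with ⟨j', s, hs, hbs, hcb⟩ | ⟨hoffb, hfb⟩
    · rcases hca with ⟨htlt, hfa⟩ | ⟨ham, hfa⟩ <;>
        rcases hcb with ⟨hslt, hfb⟩ | ⟨hbm, hfb⟩
      · have heq : T^[t+1] (y j) = T^[s+1] (y j') := by rw [← hfa, ← hfb, hab]
        obtain ⟨hjj, hts⟩ := huniq (by omega) (by omega) heq
        have hts' : t = s := by omega
        rw [hat, hbs, hjj, hts']
      · exfalso
        have heq : T^[t+1] (y j) = T^[0] (y (σ j')) := by
          rw [← hfa, hab, hfb, Function.iterate_zero_apply]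
        obtain ⟨-, hts⟩ := huniq (by omega) (Nat.zero_le _) heq
        omega
      · exfalso
        have heq : T^[s+1] (y j') = T^[0] (y (σ j)) := by
          rw [← hfb, ← hab, hfa, Function.iterate_zero_apply]
        obtain ⟨-, hts⟩ := huniq (by omega) (Nat.zero_le _) heq
        omega
      · have heq : y (σ j) = y (σ j') := by rw [← hfa, ← hfb, hab]
        have hmem : y (σ j) ∈ B (σ j') := by rw [heq]; exact hy (σ j')
        have hjj : σ j = σ j' := hBdisj (hy (σ j)) hmem
        rw [ham, hbm, σ.injective hjj]
    · exfalso
      apply hoffb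
      rcases hca with ⟨htlt, hfa⟩ | ⟨-, hfa⟩
      · exact ⟨j, t+1, by omega, by rw [← hfa, hab, hfb]⟩
      · exact ⟨σ j, 0, Nat.zero_le _, by rw [Function.iterate_zero_apply, ← hfa, hab, hfb]⟩
    · exfalso
      apply hoffa
      rcases hcb with ⟨hslt, hfb⟩ | ⟨-, hfb⟩
      · exact ⟨j', s+1, by omega, by rw [← hfb, ← hab, hfa]⟩
      · exact ⟨σ j', 0, Nat.zero_le _, by rw [Function.iterate_zero_apply, ← hfb, ← hab, hfa]⟩
    · rw [← hfa, ← hfb, hab]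
  have hbij : Function.Bijective f := Finite.injective_iff_bijective.mp hinj
  refine ⟨Equiv.ofBijective f hbij, ?_, ?_⟩
  · intro x hx
    have hnm : ¬ ∃ i, x = m i := by rintro ⟨i, rfl⟩; exact hx i rfl
    show f x = x ∨ f x = T x
    rw [hf]
    simp only [dif_neg hnm]
    by_cases hC : ∃ j, ∃ t, t < k j ∧ T^[t] (y j) = x
    · right; rw [if_pos hC]
    · left; rw [if_neg hC]
  · intro i
    show f (m i) = y (σ i)
    exact hfm i
end

section
/- In the setting of the block partition and the set Π₀ of permutations: for every permutation σ of {1,…,n} and every π ∈ Π₀ with π(m_i) ∈ S_{σ(i)} for all i, one has sgn(σ)·(-1)^{N-n} = sgn(π)·(-1)^{f(π)}, where N = |S| and f(π) is the number of fixed points of π in S \ {m₁,…,m_n}. -/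
open Equiv Finset

private lemma aux16 {α : Type*} [Fintype α] [DecidableEq α] {n : ℕ}
    (B : Fin n → Finset α) (m : Fin n → α)
    (hpart : ∀ x : α, ∃! i, x ∈ B i)
    (hm : ∀ i, m i ∈ B i)
    (hminj : Function.Injective m)
    (T : α → α)
    (hTB : ∀ i, ∀ x ∈ B i, T x ∈ B i)
    (hTm : ∀ i, T (m i) = m i)
    (horb : ∀ i, ∀ x ∈ B i, ∃ k : ℕ, T^[k] x = m i ∧
      ∀ j l, j < l → l ≤ k → T^[j] x ≠ T^[l] x) :
    ∀ d : ℕ, ∀ π : Equiv.Perm α,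
      (Finset.univ.filter fun x => (∀ i, x ≠ m i) ∧ π x ≠ x).card = d →
      (∀ x, (∀ i, x ≠ m i) → π x = x ∨ π x = T x) →
      ∀ σ : Equiv.Perm (Fin n), (∀ i, π (m i) ∈ B (σ i)) →
      Equiv.Perm.sign σ * (-1 : ℤˣ) ^ (Fintype.card α - n)
        = Equiv.Perm.sign π *
          (-1 : ℤˣ) ^ ((Finset.univ.filter fun x => π x = x ∧ ∀ i, x ≠ m i).card) := by
  intro d
  induction d using Nat.strong_induction_on with
  | _ d ih =>
  intro π hcard hπ σ hσ
  by_cases hd : ∃ x, (∀ i, x ≠ m i) ∧ π x ≠ x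
  · -- inductive step
    obtain ⟨x₀, hx₀m, hx₀⟩ := hd
    have hex : ∃ j, (∀ i, π (m j) ≠ m i) ∧ π (π (m j)) ≠ π (m j) := by
      by_contra hcon
      push_neg at hcon
      have hM : ∀ j, ∃ l, π (m j) = m l := by
        intro j
        by_contra h
        push_neg at h
        exact h j (π.injective (hcon j h))
      have hsymmM : ∀ y : α, (∀ i, y ≠ m i) → ∀ i, π.symm y ≠ m i := by
        intro y hy i hi
        obtain ⟨l, hl⟩ := hM i
        exact hy l (by rw [← hl, ← hi, Equiv.apply_symm_apply])
      set u : ℕ → α := fun t => (⇑π.symm)^[t] x₀ with hu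
      have key : ∀ t, (∀ i, u t ≠ m i) ∧ T^[t] (u t) = x₀ ∧ π (u t) ≠ u t := by
        intro t
        induction t with
        | zero => exact ⟨hx₀m, rfl, hx₀⟩
        | succ t iht =>
          obtain ⟨h1, h2, h3⟩ := iht
          have hu1 : u (t + 1) = π.symm (u t) := Function.iterate_succ_apply' _ _ _
          have hnonm : ∀ i, u (t + 1) ≠ m i := by rw [hu1]; exact hsymmM _ h1
          have hπu : π (u (t + 1)) = u t := by rw [hu1, Equiv.apply_symm_apply]
          have hnf : π (u (t + 1)) ≠ u (t + 1) := by
            rw [hπu]; intro h; exact h3 (by rw [h, hπu, h])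
          have hT : T (u (t + 1)) = u t := by
            rcases hπ _ hnonm with h | h
            · exact absurd h hnf
            · rw [← h, hπu]
          exact ⟨hnonm, by rw [Function.iterate_succ_apply, hT]; exact h2, hnf⟩
      have hinj : ∀ s t, s < t → u s ≠ u t := by
        intro s t hlt heq
        obtain ⟨i, hBi, -⟩ := hpart (u t)
        obtain ⟨k, hk, hinjk⟩ := horb i (u t) hBi
        by_cases h : t ≤ k
        · have h1 : T^[s] (u t) = x₀ := by rw [← heq]; exact (key s).2.1
          exact hinjk s t hlt h (h1.trans (key t).2.1.symm)
        · apply hx₀m i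
          have hfix : T^[t - k + k] (u t) = m i := by
            rw [Function.iterate_add_apply, hk, Function.iterate_fixed (hTm i)]
          rw [show t - k + k = t from by omega] at hfix
          exact (key t).2.1.symm.trans hfix
      obtain ⟨s, t, hst, heq⟩ := Finite.exists_ne_map_eq_of_infinite u
      rcases hst.lt_or_gt with h | h
      · exact hinj s t h heq
      · exact hinj t s h heq.symm
    obtain ⟨j, hxm, hxnf⟩ := hex
    set x := π (m j) with hxdef
    have hπx : π x = T x := (hπ x hxm).resolve_left hxnf
    set π' : Equiv.Perm α := Equiv.swap x (π x) * π with hπ'def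
    have hπ'x : π' x = x := by
      simp [hπ'def, Equiv.Perm.mul_apply, Equiv.swap_apply_right]
    have hπ'mj : π' (m j) = π x := by
      simp only [hπ'def, Equiv.Perm.mul_apply, ← hxdef, Equiv.swap_apply_left]
    have hother : ∀ y, y ≠ x → y ≠ m j → π' y = π y := by
      intro y h1 h2
      have hyx : π y ≠ x := fun h => h2 (π.injective (h.trans hxdef))
      have hyπx : π y ≠ π x := fun h => h1 (π.injective h)
      simp only [hπ'def, Equiv.Perm.mul_apply]
      exact Equiv.swap_apply_of_ne_of_ne hyx hyπx
    have hπ'mem : ∀ y, (∀ i, y ≠ m i) → π' y = y ∨ π' y = T y := by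
      intro y hy
      by_cases h : y = x
      · left; rw [h, hπ'x]
      · rw [hother y h (hy j)]
        exact hπ y hy
    have hσ' : ∀ i, π' (m i) ∈ B (σ i) := by
      intro i
      by_cases h : i = j
      · subst h
        rw [hπ'mj, hπx]
        have hxB : x ∈ B (σ i) := by rw [hxdef]; exact hσ i
        exact hTB _ _ hxB
      · rw [hother (m i) (fun hh => hxm i hh.symm) (fun hh => h (hminj hh))]
        exact hσ i
    have hxin : x ∈ univ.filter fun y => (∀ i, y ≠ m i) ∧ π y ≠ y := by
      simp only [mem_filter, mem_univ, true_and]; exact ⟨hxm, hxnf⟩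
    have hmeas : (univ.filter fun y => (∀ i, y ≠ m i) ∧ π' y ≠ y)
        = (univ.filter fun y => (∀ i, y ≠ m i) ∧ π y ≠ y).erase x := by
      ext y
      simp only [mem_erase, mem_filter, mem_univ, true_and]
      constructor
      · rintro ⟨h1, h2⟩
        have hyx : y ≠ x := fun h => h2 (by rw [h]; exact hπ'x)
        exact ⟨hyx, h1, by rw [← hother y hyx (h1 j)]; exact h2⟩
      · rintro ⟨hyx, h1, h2⟩
        exact ⟨h1, by rw [hother y hyx (h1 j)]; exact h2⟩
    have hmeaslt : (univ.filter fun y => (∀ i, y ≠ m i) ∧ π' y ≠ y).card < d := by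
      have hdpos : 0 < d := hcard ▸ Finset.card_pos.mpr ⟨x, hxin⟩
      rw [hmeas, Finset.card_erase_of_mem hxin, hcard]
      omega
    have hfset : (univ.filter fun y => π' y = y ∧ ∀ i, y ≠ m i)
        = insert x (univ.filter fun y => π y = y ∧ ∀ i, y ≠ m i) := by
      ext y
      simp only [mem_insert, mem_filter, mem_univ, true_and]
      constructor
      · rintro ⟨h1, h2⟩
        by_cases h : y = x
        · exact Or.inl h
        · exact Or.inr ⟨by rw [← hother y h (h2 j)]; exact h1, h2⟩
      · rintro (rfl | ⟨h1, h2⟩)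
        · exact ⟨hπ'x, hxm⟩
        · have hyx : y ≠ x := fun h => by rw [h] at h1; exact hxnf h1
          exact ⟨by rw [hother y hyx (h2 j)]; exact h1, h2⟩
    have hxnotin : x ∉ univ.filter fun y => π y = y ∧ ∀ i, y ≠ m i :=
      fun h => hxnf (Finset.mem_filter.mp h).2.1
    have hfcard : (univ.filter fun y => π' y = y ∧ ∀ i, y ≠ m i).card
        = (univ.filter fun y => π y = y ∧ ∀ i, y ≠ m i).card + 1 := by
      rw [hfset, Finset.card_insert_of_notMem hxnotin]
    have hsign' : Equiv.Perm.sign π' = -Equiv.Perm.sign π := by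
      rw [hπ'def, Equiv.Perm.sign_mul, Equiv.Perm.sign_swap (Ne.symm hxnf)]
      simp
    have hIH := ih _ hmeaslt π' rfl hπ'mem σ hσ'
    rw [hIH, hsign', hfcard, pow_succ]
    simp [neg_mul, mul_neg, neg_neg]
  · -- base case: π fixes all non-marked points
    push_neg at hd
    have hπm : ∀ j, π (m j) = m (σ j) := by
      intro j
      by_cases h : ∀ i, π (m j) ≠ m i
      · have h2 := hd _ h
        exact absurd (π.injective h2) (h j)
      · push_neg at h
        obtain ⟨l, hl⟩ := h
        obtain ⟨i0, -, huniq⟩ := hpart (m l)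
        have h1 : σ j = i0 := huniq _ (hl ▸ hσ j)
        have h2 : l = i0 := huniq _ (hm l)
        rw [hl, h2, h1]
    have hπeq : π = σ.viaFintypeEmbedding ⟨m, hminj⟩ := by
      ext y
      by_cases hy : ∃ i, y = m i
      · obtain ⟨i, rfl⟩ := hy
        rw [hπm i]
        exact (Equiv.Perm.viaFintypeEmbedding_apply_image σ ⟨m, hminj⟩ i).symm
      · push_neg at hy
        rw [hd y hy]
        refine (Equiv.Perm.viaFintypeEmbedding_apply_notMem_range σ ⟨m, hminj⟩ ?_).symm
        rintro ⟨i, hi⟩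
        exact hy i hi.symm
    have hsign : Equiv.Perm.sign π = Equiv.Perm.sign σ := by
      rw [hπeq, Equiv.Perm.viaFintypeEmbedding_sign]
    have hfset : (univ.filter fun y => π y = y ∧ ∀ i, y ≠ m i)
        = univ \ univ.image m := by
      ext y
      simp only [mem_filter, mem_univ, true_and, mem_sdiff, mem_image, not_exists]
      constructor
      · rintro ⟨-, h2⟩
        exact fun i hh => h2 i hh.symm
      · intro h
        have h' : ∀ i, y ≠ m i := fun i hh => h i hh.symm
        exact ⟨hd y h', h'⟩
    have hfcard : (univ.filter fun y => π y = y ∧ ∀ i, y ≠ m i).card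
        = Fintype.card α - n := by
      rw [hfset, Finset.card_sdiff_of_subset (Finset.subset_univ _), Finset.card_univ,
        Finset.card_image_of_injective _ hminj, Finset.card_univ, Fintype.card_fin]
    rw [hsign, hfcard]

/-- in the block partition setting, for every σ ∈ S_n and every
π ∈ Π₀ with π(mᵢ) ∈ S_{σ(i)} for all i, one has
sgn(σ)·(-1)^{N-n} = sgn(π)·(-1)^{f(π)}, where N = |S| and f(π) is the number
of fixed points of π outside {m₁,…,m_n}. -/
theorem stmt16 {α : Type*} [Fintype α] [DecidableEq α] {n : ℕ}
    (B : Fin n → Finset α) (m : Fin n → α)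
    (hpart : ∀ x : α, ∃! i, x ∈ B i)
    (hm : ∀ i, m i ∈ B i)
    (hminj : Function.Injective m)
    (T : α → α)
    (hTB : ∀ i, ∀ x ∈ B i, T x ∈ B i)
    (hTm : ∀ i, T (m i) = m i)
    (hTfix : ∀ x, (∀ i, x ≠ m i) → T x ≠ x)
    (horb : ∀ i, ∀ x ∈ B i, ∃ k : ℕ, T^[k] x = m i ∧
      ∀ j l, j < l → l ≤ k → T^[j] x ≠ T^[l] x)
    (π : Equiv.Perm α)
    (hπ : ∀ x, (∀ i, x ≠ m i) → π x = x ∨ π x = T x)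
    (σ : Equiv.Perm (Fin n)) (hσ : ∀ i, π (m i) ∈ B (σ i)) :
    Equiv.Perm.sign σ * (-1 : ℤˣ) ^ (Fintype.card α - n)
      = Equiv.Perm.sign π *
        (-1 : ℤˣ) ^ ((Finset.univ.filter fun x => π x = x ∧ ∀ i, x ≠ m i).card) := by
  exact aux16 B m hpart hm hminj T hTB hTm horb _ π rfl hπ σ hσ
end
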